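/- Let k ≥ 1 and let u, w be words over A with |u| ≥ k and |w| ≥ k. If binom_q(u,x) = binom_q(w,x) for every word x ∈ A^k of length k, then u = w. -/

import Mathlib

noncomputable def qbinAux {A : Type*} [DecidableEq A] : List A → List A → Polynomial ℕ
  | _, [] => 1
  | [], _ :: _ => 0
  | a :: u, b :: v =>
      Polynomial.X ^ (v.length + 1) * qbinAux u (b :: v) +
        (if a = b then qbinAux u v else 0)

/-- The `q`-binomial coefficient `binom_q(u,v)` of two words. -/
noncomputable def qbin {A : Type*} [DecidableEq A] (u v : List A) : Polynomial ℕ :=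
  qbinAux u.reverse v.reverse

namespace QbinRecon

open Polynomial

set_option linter.unusedSectionVars false

variable {A : Type*} [DecidableEq A]

lemma qbinAux_nil (u : List A) : qbinAux u [] = 1 := by cases u <;> rfl

lemma qbinAux_nil_cons (b : A) (v : List A) : qbinAux [] (b::v) = 0 := rfl

lemma qbinAux_cons (a : A) (u : List A) (b : A) (v : List A) :
    qbinAux (a::u) (b::v) = X ^ (v.length + 1) * qbinAux u (b::v) + (if a = b then qbinAux u v else 0) := rfl

lemma coeff_X_pow_mul' (n d : ℕ) (p : Polynomial ℕ) :
    (X ^ n * p).coeff d = if n ≤ d then p.coeff (d - n) else 0 := by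
  rw [mul_comm]; exact Polynomial.coeff_mul_X_pow' p n d

/-- The constant coefficient of `qbinAux u x` detects whether `x` is a prefix of `u`. -/
lemma coeff_zero_qbinAux (u x : List A) :
    (qbinAux u x).coeff 0 = if x <+: u then 1 else 0 := by
  induction u generalizing x with
  | nil =>
    cases x with
    | nil => simp [qbinAux_nil]
    | cons b v => simp [qbinAux_nil_cons]
  | cons a u ih =>
    cases x with
    | nil => simp [qbinAux_nil]
    | cons b v =>
      rw [qbinAux_cons, Polynomial.coeff_add, coeff_X_pow_mul']
      simp only [Nat.not_succ_le_zero, if_false, zero_add, List.cons_prefix_cons]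
      rw [apply_ite (fun p : Polynomial ℕ => p.coeff 0), ih]
      simp only [Polynomial.coeff_zero]
      split_ifs with h1 h2 h3 h3 <;> simp_all [eq_comm]

/-- Truncation: the coefficient of degree `j` of `qbinAux u v` only depends on the
first `v.length + j` letters of `u`. -/
lemma coeff_qbinAux_take' (u : List A) : ∀ (v : List A) (r j : ℕ), j ≤ r →
    (qbinAux u v).coeff j = (qbinAux (u.take (v.length + r)) v).coeff j := by
  induction u with
  | nil => simp
  | cons a u ih =>
    intro v r j hj
    cases v with
    | nil => simp [qbinAux_nil]
    | cons b v =>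
      have e : (b::v).length + r = (v.length + r) + 1 := by simp; omega
      rw [e, List.take_succ_cons, qbinAux_cons, qbinAux_cons,
        Polynomial.coeff_add, Polynomial.coeff_add, coeff_X_pow_mul', coeff_X_pow_mul']
      congr 1
      · split_ifs with h1
        · have hr : 1 ≤ r := by omega
          have e2 : (b::v).length + (r-1) = v.length + r := by simp; omega
          rw [ih (b::v) (r-1) (j - (v.length+1)) (by omega), e2]
        · rfl
      · split_ifs with h1
        · exact ih v r j hj
        · simp

/-- Base case of the snoc lemma, for `k = 1`. -/
lemma snoc_one (s : List A) (a c : A) :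
    (qbinAux (s ++ [c]) [a]).coeff s.length =
      (qbinAux s [a]).coeff s.length + (if c = a then 1 else 0) := by
  induction s with
  | nil =>
    simp only [List.nil_append, List.length_nil]
    rw [show qbinAux [c] [a] = X ^ 1 * qbinAux ([]:List A) [a] + (if c = a then qbinAux ([]:List A) [] else 0) from rfl]
    rw [show qbinAux ([]:List A) [a] = 0 from rfl, qbinAux_nil]
    simp [apply_ite (fun p : Polynomial ℕ => p.coeff 0)]
  | cons d s ihs =>
    rw [List.cons_append, qbinAux_cons, qbinAux_cons, qbinAux_nil, qbinAux_nil]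
    simp only [List.length_nil, zero_add, pow_one, List.length_cons,
      Polynomial.coeff_add, Polynomial.coeff_X_mul]
    rw [ihs]
    have h1 : (if d = a then (1:Polynomial ℕ) else 0).coeff (s.length + 1) = 0 := by
      split_ifs <;> simp [Polynomial.coeff_one]
    rw [h1]
    ring

/-- Appending a letter `c` to a word `s` adds `1` to the coefficient of degree
`|s| + 1 - k` of `qbinAux` against `s.take (k-1) ++ [a]` exactly when `c = a`. -/
lemma coeff_qbinAux_snoc : ∀ (k : ℕ), 1 ≤ k → ∀ (s : List A), k - 1 ≤ s.length → ∀ (a c : A),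
    (qbinAux (s ++ [c]) (s.take (k-1) ++ [a])).coeff (s.length + 1 - k) =
      (qbinAux s (s.take (k-1) ++ [a])).coeff (s.length + 1 - k) + (if c = a then 1 else 0) := by
  intro k
  induction k with
  | zero => omega
  | succ K ihK =>
    intro _ s hs a c
    rcases Nat.eq_zero_or_pos K with hK0 | hKpos
    · subst hK0
      simpa using snoc_one s a c
    -- K ≥ 1
    cases s with
    | nil => simp only [List.length_nil] at hs; omega
    | cons d s' =>
      have hs' : K - 1 ≤ s'.length := by simp only [List.length_cons] at hs; omega
      have hx''len : (s'.take (K-1) ++ [a]).length = K := by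
        simp [List.length_take]; omega
      have hxform : (d::s').take (K+1-1) ++ [a] = d :: (s'.take (K-1) ++ [a]) := by
        have e : K + 1 - 1 = (K-1) + 1 := by omega
        rw [e, List.take_succ_cons]; rfl
      have hidx : (d::s').length + 1 - (K+1) = s'.length + 1 - K := by
        simp only [List.length_cons]; omega
      rw [hxform, hidx, List.cons_append, qbinAux_cons, qbinAux_cons, hx''len,
        if_pos rfl, if_pos rfl, Polynomial.coeff_add, Polynomial.coeff_add,
        QbinRecon.coeff_X_pow_mul', QbinRecon.coeff_X_pow_mul', ihK hKpos s' hs' a c]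
      have hfirst : (if K + 1 ≤ s'.length + 1 - K then
            (qbinAux (s' ++ [c]) (d :: (s'.take (K-1) ++ [a]))).coeff (s'.length + 1 - K - (K+1)) else 0) =
          (if K + 1 ≤ s'.length + 1 - K then
            (qbinAux s' (d :: (s'.take (K-1) ++ [a]))).coeff (s'.length + 1 - K - (K+1)) else 0) := by
        split_ifs with hc
        · have hlen : (d :: (s'.take (K-1) ++ [a])).length + (s'.length + 1 - K - (K+1)) = s'.length + 1 - K := by
            simp [List.length_take]; omega
          rw [coeff_qbinAux_take' (s'++[c]) _ _ _ le_rfl,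
              coeff_qbinAux_take' s' (d :: (s'.take (K-1) ++ [a])) _ _ le_rfl, hlen,
              List.take_append_of_le_length (by omega)]
        · rfl
      rw [hfirst]
      ring

section Main

variable (k : ℕ) (hk : 1 ≤ k) (u w : List A) (hu : k ≤ u.length) (hw : k ≤ w.length)
  (h : ∀ x : List A, x.length = k → qbinAux u x = qbinAux w x)

include hk hu hw h

lemma take_k_eq : u.take k = w.take k := by
  have h1 : (qbinAux u (u.take k)).coeff 0 = 1 := by
    rw [coeff_zero_qbinAux, if_pos (List.take_prefix k u)]
  have hlen : (u.take k).length = k := by simp [List.length_take]; omega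
  rw [h (u.take k) hlen, coeff_zero_qbinAux] at h1
  split_ifs at h1 with hp
  rw [List.prefix_iff_eq_take, hlen] at hp
  exact hp

lemma step (m : ℕ) (hm : k ≤ m) (hmu : m < u.length) (hmw : m < w.length)
    (hs : u.take m = w.take m) : u.take (m+1) = w.take (m+1) := by
  set s : List A := u.take m with hsdef
  have hslen : s.length = m := by simp [hsdef, List.length_take]; omega
  set a : A := u[m] with ha
  set c : A := w[m] with hc
  have hus : u.take (m+1) = s ++ [a] := by
    rw [← List.take_concat_get hmu, List.concat_eq_append, ← hsdef, ← ha]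
  have hws : w.take (m+1) = s ++ [c] := by
    rw [← List.take_concat_get hmw, List.concat_eq_append, ← hs, ← hc]
  set x : List A := s.take (k-1) ++ [a] with hx
  have hxlen : x.length = k := by simp [hx, List.length_take]; omega
  have hcoeff := congrArg (fun p => p.coeff (m + 1 - k)) (h x hxlen)
  have htu : (qbinAux u x).coeff (m+1-k) = (qbinAux (u.take (m+1)) x).coeff (m+1-k) := by
    have e : x.length + (m+1-k) = m+1 := by omega
    rw [coeff_qbinAux_take' u x (m+1-k) (m+1-k) le_rfl, e]
  have htw : (qbinAux w x).coeff (m+1-k) = (qbinAux (w.take (m+1)) x).coeff (m+1-k) := by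
    have e : x.length + (m+1-k) = m+1 := by omega
    rw [coeff_qbinAux_take' w x (m+1-k) (m+1-k) le_rfl, e]
  rw [htu, htw, hus, hws] at hcoeff
  have hsnu := coeff_qbinAux_snoc k hk s (by omega) a a
  have hsnw := coeff_qbinAux_snoc k hk s (by omega) a c
  rw [hslen] at hsnu hsnw
  rw [← hx] at hsnu hsnw
  rw [hsnu, hsnw, if_pos rfl] at hcoeff
  have : c = a := by
    by_contra hne
    rw [if_neg hne] at hcoeff
    omega
  rw [hus, hws, this]

lemma take_all : ∀ m, m ≤ u.length → m ≤ w.length → u.take m = w.take m := by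
  intro m
  induction m with
  | zero => simp
  | succ m ih =>
    intro hmu hmw
    rcases le_or_gt (m+1) k with hle | hlt
    · have hk' := take_k_eq k hk u w hu hw h
      have e1 : u.take (m+1) = (u.take k).take (m+1) := by rw [List.take_take]; simp [Nat.min_eq_left hle]
      have e2 : w.take (m+1) = (w.take k).take (m+1) := by rw [List.take_take]; simp [Nat.min_eq_left hle]
      rw [e1, e2, hk']
    · exact step k hk u w hu hw h m (by omega) (by omega) (by omega) (ih (by omega) (by omega))

lemma len_eq : u.length = w.length := by
  by_contra hne
  rcases Nat.lt_or_ge u.length w.length with hlt | hge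
  · have hall := take_all k hk u w hu hw h u.length le_rfl (le_of_lt hlt)
    rw [List.take_length] at hall
    set c : A := w[u.length] with hc
    set x : List A := u.take (k-1) ++ [c] with hx
    have hxlen : x.length = k := by simp [hx, List.length_take]; omega
    have hcoeff := congrArg (fun p => p.coeff (u.length + 1 - k)) (h x hxlen)
    have htw : (qbinAux w x).coeff (u.length+1-k) = (qbinAux (w.take (u.length+1)) x).coeff (u.length+1-k) := by
      have e : x.length + (u.length+1-k) = u.length+1 := by omega
      rw [coeff_qbinAux_take' w x (u.length+1-k) (u.length+1-k) le_rfl, e]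
    have hws : w.take (u.length+1) = u ++ [c] := by
      rw [← List.take_concat_get hlt, List.concat_eq_append, ← hall, ← hc]
    rw [htw, hws] at hcoeff
    have hsn := coeff_qbinAux_snoc k hk u (by omega) c c
    rw [← hx, if_pos rfl] at hsn
    rw [hsn] at hcoeff
    omega
  · have hlt : w.length < u.length := by omega
    have hall := take_all k hk u w hu hw h w.length (le_of_lt hlt) le_rfl
    rw [List.take_length] at hall
    set c : A := u[w.length] with hc
    set x : List A := w.take (k-1) ++ [c] with hx
    have hxlen : x.length = k := by simp [hx, List.length_take]; omega
    have hcoeff := congrArg (fun p => p.coeff (w.length + 1 - k)) (h x hxlen)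
    have htu : (qbinAux u x).coeff (w.length+1-k) = (qbinAux (u.take (w.length+1)) x).coeff (w.length+1-k) := by
      have e : x.length + (w.length+1-k) = w.length+1 := by omega
      rw [coeff_qbinAux_take' u x (w.length+1-k) (w.length+1-k) le_rfl, e]
    have hus : u.take (w.length+1) = w ++ [c] := by
      rw [← List.take_concat_get hlt, List.concat_eq_append, hall, ← hc]
    rw [htu, hus] at hcoeff
    have hsn := coeff_qbinAux_snoc k hk w (by omega) c c
    rw [← hx, if_pos rfl] at hsn
    rw [hsn] at hcoeff
    omega

lemma recon : u = w := by
  have hlen := len_eq k hk u w hu hw h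
  have := take_all k hk u w hu hw h u.length le_rfl (by omega)
  rwa [List.take_length, hlen, List.take_length] at this

end Main

end QbinRecon

/-- Reconstruction: a word `u` with `|u| ≥ k ≥ 1` is uniquely determined by the
polynomials `binom_q(u,x)` for `x ∈ A^k`. -/
theorem qbin_reconstruction (A : Type*) [Fintype A] [DecidableEq A]
    (k : ℕ) (hk : 1 ≤ k) (u w : List A) (hu : k ≤ u.length) (hw : k ≤ w.length)
    (h : ∀ x : List A, x.length = k → qbin u x = qbin w x) :
    u = w := by
  have h' : ∀ y : List A, y.length = k → qbinAux u.reverse y = qbinAux w.reverse y := by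
    intro y hy
    have := h y.reverse (by simpa using hy)
    simpa [qbin] using this
  have := QbinRecon.recon k hk u.reverse w.reverse (by simpa using hu) (by simpa using hw) h'
  exact List.reverse_injective this
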